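/- Let G and H be finite simple graphs such that neither G nor H has an isolatable vertex, and suppose the Cartesian product G □ H is well-covered. Then for every maximal independent set M of G there exists a maximal independent set N of G with M ∩ N = ∅, and likewise for every maximal independent set M of H there exists a maximal independent set N of H with M ∩ N = ∅. -/

import Mathlib

/-- A set of vertices is independent if no two of its vertices are adjacent. -/
def IsIndep {V : Type*} (G : SimpleGraph V) (s : Set V) : Prop :=
  ∀ ⦃u⦄, u ∈ s → ∀ ⦃v⦄, v ∈ s → ¬ G.Adj u v

/-- A maximal independent set: independent and contained in no strictly larger
independent set. -/
def MaxIndep {V : Type*} (G : SimpleGraph V) (s : Set V) : Prop :=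
  IsIndep G s ∧ ∀ t : Set V, IsIndep G t → s ⊆ t → s = t

/-- A maximal independent set of the subgraph induced on `A`. -/
def MaxIndepOn {V : Type*} (G : SimpleGraph V) (A : Set V) (s : Set V) : Prop :=
  s ⊆ A ∧ IsIndep G s ∧ ∀ t : Set V, t ⊆ A → IsIndep G t → s ⊆ t → s = t

/-- A graph is well-covered if every maximal independent set has the same cardinality. -/
def WellCovered {V : Type*} (G : SimpleGraph V) : Prop :=
  ∀ s t : Set V, MaxIndep G s → MaxIndep G t → s.ncard = t.ncard

/-- The closed neighborhood `N[S]`: the union of `S` with the set of all vertices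
adjacent to some vertex of `S`. -/
def ClosedNbhd {V : Type*} (G : SimpleGraph V) (S : Set V) : Set V :=
  S ∪ {v | ∃ u ∈ S, G.Adj u v}

/-- A vertex `x` is isolatable if there is an independent set `M` such that `x` is the
unique vertex lying outside `N[M]`. -/
def Isolatable {V : Type*} (G : SimpleGraph V) (x : V) : Prop :=
  ∃ M : Set V, IsIndep G M ∧ (ClosedNbhd G M)ᶜ = {x}

/-- Key lemma: in a finite graph with no isolatable vertex, every independent set is
disjoint from some maximal independent set. -/
lemma key_disjoint {V : Type*} [Fintype V] (G : SimpleGraph V)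
    (hiso : ∀ x : V, ¬ Isolatable G x) (M : Set V) (hM : IsIndep G M) :
    ∃ N : Set V, MaxIndep G N ∧ M ∩ N = ∅ := by
  classical
  -- take an inclusion-maximal independent subset `D` of `Mᶜ`
  have hfin : ({s : Set V | s ⊆ Mᶜ ∧ IsIndep G s}).Finite := Set.toFinite _
  have hne : ({s : Set V | s ⊆ Mᶜ ∧ IsIndep G s}).Nonempty :=
    ⟨∅, by simp [IsIndep]⟩
  obtain ⟨D, hD, hDmax⟩ : ∃ D ∈ {s : Set V | s ⊆ Mᶜ ∧ IsIndep G s}, ∀ D' ∈ {s : Set V | s ⊆ Mᶜ ∧ IsIndep G s}, id D ≤ id D' → id D = id D' := by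
    obtain ⟨D, hD, hDm⟩ := Set.Finite.exists_maximalFor id _ hfin hne
    exact ⟨D, hD, fun D' h1 h2 => le_antisymm h2 (hDm h1 h2)⟩
  obtain ⟨hDsub, hDind⟩ := hD
  -- `D` dominates `Mᶜ`
  have hdom : ∀ v : V, v ∉ M → v ∈ ClosedNbhd G D := by
    intro v hv
    by_contra hvc
    have hvD : v ∉ D := fun h => hvc (Or.inl h)
    have hvadj : ∀ u ∈ D, ¬ G.Adj u v := by
      intro u hu hadj
      exact hvc (Or.inr ⟨u, hu, hadj⟩)
    have hmem : (D ∪ {v}) ∈ {s : Set V | s ⊆ Mᶜ ∧ IsIndep G s} := by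
      constructor
      · intro w hw
        rcases hw with hw | hw
        · exact hDsub hw
        · rcases hw with rfl; exact hv
      · intro a ha b hb hadj
        rcases ha with ha | ha <;> rcases hb with hb | hb
        · exact hDind ha hb hadj
        · rcases hb with rfl; exact hvadj a ha hadj
        · rcases ha with rfl; exact hvadj b hb hadj.symm
        · rcases ha with rfl; rcases hb with rfl; exact G.irrefl hadj
    have heq := hDmax _ hmem (Set.subset_union_left)
    simp only [id] at heq
    have : v ∈ D := by
      have : v ∈ D ∪ {v} := Or.inr rfl
      rwa [← heq] at this
    exact hvD this
  -- the set of vertices of `M` not dominated by `D`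
  by_cases hA : (M \ ClosedNbhd G D) = ∅
  · -- `D` dominates everything: `D` is a maximal independent set disjoint from `M`
    have hdomall : ∀ v : V, v ∈ ClosedNbhd G D := by
      intro v
      by_cases hv : v ∈ M
      · by_contra hvc
        have : v ∈ M \ ClosedNbhd G D := ⟨hv, hvc⟩
        rw [hA] at this; exact this
      · exact hdom v hv
    refine ⟨D, ⟨hDind, ?_⟩, ?_⟩
    · intro t ht hsub
      refine Set.Subset.antisymm hsub ?_
      intro v hv
      rcases hdomall v with hv' | ⟨u, hu, hadj⟩
      · exact hv'
      · exact absurd hadj (ht (hsub hu) hv)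
    · ext v
      simp only [Set.mem_inter_iff, Set.mem_empty_iff_false, iff_false, not_and]
      intro hvM hvD
      exact (hDsub hvD) hvM
  · -- otherwise some `x ∈ M` is isolatable, contradiction
    exfalso
    obtain ⟨x, hxM, hxD⟩ := Set.nonempty_iff_ne_empty.mpr hA
    apply hiso x
    refine ⟨D ∪ ((M \ ClosedNbhd G D) \ {x}), ?_, ?_⟩
    · -- independence
      intro a ha b hb hadj
      have notadjDA : ∀ u ∈ D, ∀ w ∈ M \ ClosedNbhd G D, ¬ G.Adj u w := by
        intro u hu w hw hadj'
        exact hw.2 (Or.inr ⟨u, hu, hadj'⟩)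
      rcases ha with ha | ha <;> rcases hb with hb | hb
      · exact hDind ha hb hadj
      · exact notadjDA a ha b hb.1 hadj
      · exact notadjDA b hb a ha.1 hadj.symm
      · exact hM ha.1.1 hb.1.1 hadj
    · -- the complement of the closed neighborhood is `{x}`
      ext v
      simp only [Set.mem_compl_iff, Set.mem_singleton_iff]
      constructor
      · intro hv
        have hvD : v ∉ ClosedNbhd G D := by
          intro h
          rcases h with h | ⟨u, hu, hadj⟩
          · exact hv (Or.inl (Or.inl h))
          · exact hv (Or.inr ⟨u, Or.inl hu, hadj⟩)
        have hvM : v ∈ M := by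
          by_contra hvm
          exact hvD (hdom v hvm)
        have hvA : v ∈ M \ ClosedNbhd G D := ⟨hvM, hvD⟩
        by_contra hvx
        exact hv (Or.inl (Or.inr ⟨hvA, hvx⟩))
      · intro hv
        subst hv
        intro hx
        rcases hx with hx | hx
        · rcases hx with hx | hx
          · exact hxD (Or.inl hx)
          · exact hx.2 rfl
        · rcases hx with ⟨u, hu, hadj⟩
          rcases hu with hu | hu
          · exact hxD (Or.inr ⟨u, hu, hadj⟩)
          · exact hM hu.1.1 hxM hadj

/-- If neither `G` nor `H` has an isolatable vertex and `G □ H` is well-covered, then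
every maximal independent set of `G` is disjoint from some maximal independent set of
`G`, and likewise for `H`. -/
theorem stmt_3 {V W : Type*} [Fintype V] [Fintype W]
    (G : SimpleGraph V) (H : SimpleGraph W)
    (hGiso : ∀ x : V, ¬ Isolatable G x) (hHiso : ∀ y : W, ¬ Isolatable H y)
    (hGH : WellCovered (G.boxProd H)) :
    (∀ M : Set V, MaxIndep G M → ∃ N : Set V, MaxIndep G N ∧ M ∩ N = ∅) ∧
    (∀ M : Set W, MaxIndep H M → ∃ N : Set W, MaxIndep H N ∧ M ∩ N = ∅) := by
  exact ⟨fun M hM => key_disjoint G hGiso M hM.1,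
         fun M hM => key_disjoint H hHiso M hM.1⟩
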